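/- Under the assumptions of the A-HPE framework (Theorem 3.1) with σ ∈ [0,1), one additionally has 2β_{K−1}(f(x_f^K) − f*) + ((1−σ)/(1+σ)) Σ_{k=0}^{K−1} α_k^{-2} ‖x_g^k − x^{k,*}‖² ≤ ‖x^0 − x*‖², where x^{k,*} is the unique minimizer of A_{λ_k}(x; x_g^k) = f(x) + (1/(2λ_k))‖x − x_g^k‖². -/

import Mathlib

open Finset

open RealInnerProductSpace

set_option linter.unusedSectionVars false
variable {E : Type*} [NormedAddCommGroup E] [InnerProductSpace ℝ E] [CompleteSpace E]

lemma ahpe_subgrad (f : E → ℝ) (hconv : ConvexOn ℝ Set.univ f)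
    (hdiff : Differentiable ℝ f) (y z : E) :
    f y + ⟪gradient f y, z - y⟫ ≤ f z := by
  have hline : HasDerivAt (fun t : ℝ => y + t • (z - y)) (z - y) 0 := by
    simpa using ((hasDerivAt_id (0:ℝ)).smul_const (z - y)).const_add y
  have hg : HasGradientAt f (gradient f y) y := (hdiff y).hasGradientAt
  have hfd := hasGradientAt_iff_hasFDerivAt.mp hg
  have hcomp : HasDerivAt (fun t : ℝ => f (y + t • (z - y))) ⟪gradient f y, z - y⟫ 0 := by
    have hfd' : HasFDerivAt f ((InnerProductSpace.toDual ℝ E) (gradient f y)) (y + (0:ℝ) • (z - y)) := by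
      simpa using hfd
    have h := hfd'.comp_hasDerivAt (0:ℝ) hline
    simpa [InnerProductSpace.toDual_apply_apply, Function.comp_def] using h
  have hcv : ConvexOn ℝ Set.univ (fun t : ℝ => f (y + t • (z - y))) := by
    have := hconv.comp_affineMap (AffineMap.lineMap y z)
    have heq : (f ∘ (AffineMap.lineMap y z : ℝ →ᵃ[ℝ] E)) = fun t : ℝ => f (y + t • (z - y)) := by
      funext t
      simp [AffineMap.lineMap_apply_module]
      ring_nf
      congr 1
      module
    rw [heq] at this
    simpa using this
  have hs := hcv.le_slope_of_hasDerivAt (Set.mem_univ (0:ℝ)) (Set.mem_univ (1:ℝ)) one_pos hcomp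
  have : slope (fun t : ℝ => f (y + t • (z - y))) 0 1 = f z - f y := by
    simp [slope]
  rw [this] at hs
  linarith


lemma ahpe_quad_id (a b : E) (t : ℝ) :
    ‖a + t • (b - a)‖ ^ 2 =
      (1 - t) * ‖a‖ ^ 2 + t * ‖b‖ ^ 2 - t * (1 - t) * ‖b - a‖ ^ 2 := by
  have h1 : ‖a + t • (b - a)‖ ^ 2
      = ‖a‖ ^ 2 + 2 * (t * ⟪a, b - a⟫) + t ^ 2 * ‖b - a‖ ^ 2 := by
    rw [norm_add_sq_real, real_inner_smul_right, norm_smul, mul_pow, Real.norm_eq_abs, sq_abs]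
  have h2 : ‖b - a‖ ^ 2 = ‖b‖ ^ 2 - 2 * ⟪a, b⟫ + ‖a‖ ^ 2 := by
    rw [norm_sub_sq_real, real_inner_comm]
  have h3 : ⟪a, b - a⟫ = ⟪a, b⟫ - ‖a‖ ^ 2 := by
    rw [inner_sub_right, real_inner_self_eq_norm_sq]
  rw [h1, h3, h2]; ring

lemma ahpe_diff_id (u w : E) : ‖u‖ ^ 2 - ‖u - w‖ ^ 2 = 2 * ⟪u, w⟫ - ‖w‖ ^ 2 := by
  rw [norm_sub_sq_real]; ring

lemma ahpe_real_limit {c' D : ℝ} (h : ∀ t : ℝ, 0 < t → t < 1 → (1 - t) * c' ≤ D) :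
    c' ≤ D := by
  by_contra hcon
  push_neg at hcon
  have hDge : c' / 2 ≤ D := by
    have := h (1/2) (by norm_num) (by norm_num)
    linarith
  have hc'pos : 0 < c' := by linarith
  have hc'ne : c' ≠ 0 := ne_of_gt hc'pos
  have ht := h ((c' - D) / (2 * c')) (div_pos (by linarith) (by positivity))
    (by rw [div_lt_one (by positivity)]; nlinarith)
  have heq : (1 - (c' - D) / (2 * c')) * c' = c' - (c' - D) / 2 := by
    field_simp
  rw [heq] at ht
  linarith

lemma ahpe_prox_err (f : E → ℝ) (hconv : ConvexOn ℝ Set.univ f)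
    (hdiff : Differentiable ℝ f) (g xs y : E) (lam : ℝ) (hlam : 0 < lam)
    (hmin : IsMinOn (fun w => f w + (1 / (2 * lam)) * ‖w - g‖ ^ 2) Set.univ xs) :
    ‖y - xs‖ ≤ lam * ‖gradient f y + lam⁻¹ • (y - g)‖ := by
  set A : E → ℝ := fun w => f w + (1 / (2 * lam)) * ‖w - g‖ ^ 2 with hA
  set e : E := gradient f y + lam⁻¹ • (y - g) with he
  -- lower bound: strong convexity via minimality
  have hlow : ∀ t : ℝ, 0 < t → t < 1 →
      (1 - t) * ((1 / (2 * lam)) * ‖y - xs‖ ^ 2) ≤ A y - A xs := by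
    intro t ht0 ht1
    have hmem : A xs ≤ A (xs + t • (y - xs)) := hmin (Set.mem_univ (xs + t • (y - xs)))
    have hfc : f (xs + t • (y - xs)) ≤ (1 - t) * f xs + t * f y := by
      have h := hconv.2 (Set.mem_univ xs) (Set.mem_univ y)
        (by linarith : (0:ℝ) ≤ 1 - t) (le_of_lt ht0) (by ring)
      have hpt : (1 - t) • xs + t • y = xs + t • (y - xs) := by module
      rw [hpt] at h
      simpa using h
    have hq : ‖(xs + t • (y - xs)) - g‖ ^ 2
        = (1 - t) * ‖xs - g‖ ^ 2 + t * ‖y - g‖ ^ 2 - t * (1 - t) * ‖y - xs‖ ^ 2 := by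
      have h0 : (xs + t • (y - xs)) - g = (xs - g) + t • ((y - g) - (xs - g)) := by module
      have h1 : (y - g) - (xs - g) = y - xs := by module
      rw [h0, ahpe_quad_id, h1]
    have hAle : A (xs + t • (y - xs)) ≤ (1 - t) * A xs + t * A y
        - (1 / (2 * lam)) * (t * (1 - t) * ‖y - xs‖ ^ 2) := by
      simp only [hA]
      rw [hq]
      have hlp : 0 < 1 / (2 * lam) := by positivity
      nlinarith [hfc]
    have h2 : t * ((1 - t) * ((1 / (2 * lam)) * ‖y - xs‖ ^ 2)) ≤ t * (A y - A xs) := by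
      ring_nf at hAle ⊢
      nlinarith [hAle, hmem]
    exact le_of_mul_le_mul_left h2 ht0
  have hlow' : (1 / (2 * lam)) * ‖y - xs‖ ^ 2 ≤ A y - A xs := ahpe_real_limit hlow
  -- upper bound via subgradient inequality
  have hsub := ahpe_subgrad f hconv hdiff y xs
  have hup : A y - A xs ≤ ⟪e, y - xs⟫ - (1 / (2 * lam)) * ‖y - xs‖ ^ 2 := by
    have hgrad : ⟪gradient f y, y - xs⟫ = ⟪e, y - xs⟫ - lam⁻¹ * ⟪y - g, y - xs⟫ := by
      rw [he, inner_add_left, real_inner_smul_left]; ring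
    have hinner : ⟪gradient f y, xs - y⟫ = - ⟪gradient f y, y - xs⟫ := by
      rw [← inner_neg_right]; congr 1; module
    have h1 : xs - g = (y - g) - (y - xs) := by module
    have hnorm : ‖y - g‖ ^ 2 - ‖xs - g‖ ^ 2 = 2 * ⟪y - g, y - xs⟫ - ‖y - xs‖ ^ 2 := by
      rw [h1]; exact ahpe_diff_id (y - g) (y - xs)
    have hexp : (1 / (2 * lam)) * (‖y - g‖ ^ 2 - ‖xs - g‖ ^ 2)
        = lam⁻¹ * ⟪y - g, y - xs⟫ - (1 / (2 * lam)) * ‖y - xs‖ ^ 2 := by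
      rw [hnorm]
      field_simp
    simp only [hA]
    linarith [hsub, hgrad, hinner, hexp]
  have h2 : ⟪e, y - xs⟫ ≤ ‖e‖ * ‖y - xs‖ := real_inner_le_norm e (y - xs)
  have hlaminv : 1 / (2 * lam) + 1 / (2 * lam) = lam⁻¹ := by
    rw [← add_div, inv_eq_one_div, div_eq_div_iff (by positivity) (by positivity)]
    ring
  have hineq : lam⁻¹ * ‖y - xs‖ ^ 2 ≤ ‖e‖ * ‖y - xs‖ := by
    rw [← hlaminv]; linarith
  rcases eq_or_lt_of_le (norm_nonneg (y - xs)) with h0 | h0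
  · rw [← h0]; positivity
  · have h3 : lam⁻¹ * ‖y - xs‖ ≤ ‖e‖ := by
      have h4 : lam⁻¹ * ‖y - xs‖ * ‖y - xs‖ ≤ ‖e‖ * ‖y - xs‖ := by nlinarith
      exact le_of_mul_le_mul_right h4 h0
    calc ‖y - xs‖ = lam * (lam⁻¹ * ‖y - xs‖) := by field_simp
      _ ≤ lam * ‖e‖ := by nlinarith


set_option maxHeartbeats 1000000 in
theorem ahpe_convergence_modified {d : ℕ}
    (f : EuclideanSpace ℝ (Fin d) → ℝ)
    (hconv : ConvexOn ℝ Set.univ f) (hdiff : Differentiable ℝ f)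
    (xstar : EuclideanSpace ℝ (Fin d)) (hmin : IsMinOn f Set.univ xstar)
    (K : ℕ) (hK : 1 ≤ K) (σ : ℝ) (hσ : σ ∈ Set.Ico (0 : ℝ) 1)
    (η β lam α : ℕ → ℝ)
    (hηpos : ∀ k, 0 < η k)
    (hβ : ∀ k, β k = ∑ l ∈ Finset.range (k + 1), η l)
    (hlam : ∀ k, lam k = (η k) ^ 2 / β k)
    (hα : ∀ k, α k = η k / β k)
    (x xf xg xs : ℕ → EuclideanSpace ℝ (Fin d))
    (hx0 : x 0 = xf 0)
    (hxg : ∀ k < K, xg k = α k • x k + (1 - α k) • xf k)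
    (hxs : ∀ k < K,
      IsMinOn (fun y => f y + (1 / (2 * lam k)) * ‖y - xg k‖ ^ 2) Set.univ (xs k))
    (hinexact : ∀ k < K,
      ‖gradient f (xf (k + 1)) + (lam k)⁻¹ • (xf (k + 1) - xg k)‖ ≤
        σ * (lam k)⁻¹ * ‖xf (k + 1) - xg k‖)
    (hstep : ∀ k < K, x (k + 1) = x k - η k • gradient f (xf (k + 1))) :
    2 * β (K - 1) * (f (xf K) - f xstar) +
        ((1 - σ) / (1 + σ)) *
          ∑ k ∈ Finset.range K, ((α k)⁻¹) ^ 2 * ‖xg k - xs k‖ ^ 2 ≤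
      ‖x 0 - xstar‖ ^ 2 := by
  obtain ⟨hσ0, hσ1⟩ := hσ
  set B : ℕ → ℝ := fun k => ∑ l ∈ Finset.range k, η l with hB
  have hBnn : ∀ k, 0 ≤ B k := fun k =>
    Finset.sum_nonneg fun l _ => (hηpos l).le
  have hBsucc : ∀ k, B (k + 1) = B k + η k := fun k => Finset.sum_range_succ η k
  have hβB : ∀ k, β k = B (k + 1) := fun k => hβ k
  have hβpos : ∀ k, 0 < β k := fun k => by
    rw [hβB, hBsucc]; have := hBnn k; have := hηpos k; linarith
  have hlampos : ∀ k, 0 < lam k := fun k => by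
    rw [hlam]; exact div_pos (pow_pos (hηpos k) 2) (hβpos k)
  -- per-step estimate
  have perstep : ∀ k < K,
      2 * B (k + 1) * (f (xf (k + 1)) - f xstar) +
        ((1 - σ) / (1 + σ)) * (((α k)⁻¹) ^ 2 * ‖xg k - xs k‖ ^ 2) +
        ‖x (k + 1) - xstar‖ ^ 2 ≤
      2 * B k * (f (xf k) - f xstar) + ‖x k - xstar‖ ^ 2 := by
    intro k hk
    set y := xf (k + 1) with hy
    set v := gradient f y with hv
    set g := xg k with hg
    set s := xs k with hs
    set L := lam k with hL
    set R : ℝ := ((α k)⁻¹) ^ 2 with hR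
    clear_value y v g s L R
    have hLpos : 0 < L := by rw [hL]; exact hlampos k
    have hLne : L ≠ 0 := ne_of_gt hLpos
    have hβne : β k ≠ 0 := ne_of_gt (hβpos k)
    have hηne : η k ≠ 0 := ne_of_gt (hηpos k)
    have hRnn : 0 ≤ R := by rw [hR]; positivity
    have hLb : L * β k = (η k) ^ 2 := by
      rw [hL, hlam]; field_simp
    have hRL : R * L = β k := by
      rw [hR, hL, hα, hlam]; field_simp
    -- inexactness, prox error
    have hine : ‖v + L⁻¹ • (y - g)‖ ≤ σ * L⁻¹ * ‖y - g‖ := by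
      rw [hv, hy, hg, hL]; exact hinexact k hk
    have hprox : ‖y - s‖ ≤ σ * ‖y - g‖ := by
      have hmin' : IsMinOn (fun w => f w + (1 / (2 * L)) * ‖w - g‖ ^ 2) Set.univ s := by
        rw [hL, hg, hs]; exact hxs k hk
      have h1 : ‖y - s‖ ≤ L * ‖gradient f y + L⁻¹ • (y - g)‖ :=
        ahpe_prox_err f hconv hdiff g s y L hLpos hmin'
      rw [← hv] at h1
      have h2 : L * ‖v + L⁻¹ • (y - g)‖ ≤ L * (σ * L⁻¹ * ‖y - g‖) :=
        mul_le_mul_of_nonneg_left hine hLpos.le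
      have h3 : L * (σ * L⁻¹ * ‖y - g‖) = σ * ‖y - g‖ := by field_simp
      rw [h3] at h2
      exact le_trans h1 h2
    have hgs : ‖g - s‖ ≤ (1 + σ) * ‖y - g‖ := by
      have h1 : ‖g - s‖ ≤ ‖g - y‖ + ‖y - s‖ := norm_sub_le_norm_sub_add_norm_sub g y s
      have h2 : ‖g - y‖ = ‖y - g‖ := norm_sub_rev g y
      linarith [hprox, h1, h2.le, h2.ge]
    -- key inequality (★)
    have hbound : ‖L • v + (y - g)‖ ≤ σ * ‖y - g‖ := by
      have hLe : L • (v + L⁻¹ • (y - g)) = L • v + (y - g) := by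
        rw [smul_add, smul_smul, mul_inv_cancel₀ hLne, one_smul]
      have h1 : ‖L • (v + L⁻¹ • (y - g))‖ = L * ‖v + L⁻¹ • (y - g)‖ := by
        rw [norm_smul, Real.norm_eq_abs, abs_of_pos hLpos]
      have h2 : L * ‖v + L⁻¹ • (y - g)‖ ≤ L * (σ * L⁻¹ * ‖y - g‖) :=
        mul_le_mul_of_nonneg_left hine hLpos.le
      have h3 : L * (σ * L⁻¹ * ‖y - g‖) = σ * ‖y - g‖ := by field_simp
      rw [hLe] at h1
      linarith [h1.le, h1.ge, h2, h3.le, h3.ge]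
    have hnw : ‖L • v + (y - g)‖ ^ 2
        = L ^ 2 * ‖v‖ ^ 2 + 2 * L * ⟪v, y - g⟫ + ‖y - g‖ ^ 2 := by
      rw [norm_add_sq_real, real_inner_smul_left, norm_smul, mul_pow, Real.norm_eq_abs, sq_abs]
      ring
    have hsq : L ^ 2 * ‖v‖ ^ 2 + 2 * L * ⟪v, y - g⟫ + ‖y - g‖ ^ 2
        ≤ σ ^ 2 * ‖y - g‖ ^ 2 := by
      rw [← hnw]
      nlinarith [hbound, norm_nonneg (L • v + (y - g)), norm_nonneg (y - g)]
    have hstar : 2 * β k * ⟪v, y - g⟫ + (η k) ^ 2 * ‖v‖ ^ 2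
        ≤ (σ ^ 2 - 1) * (R * ‖y - g‖ ^ 2) := by
      have hmul := mul_le_mul_of_nonneg_left hsq hRnn
      have e1 : R * (L ^ 2 * ‖v‖ ^ 2 + 2 * L * ⟪v, y - g⟫ + ‖y - g‖ ^ 2)
          = (η k) ^ 2 * ‖v‖ ^ 2 + 2 * β k * ⟪v, y - g⟫ + R * ‖y - g‖ ^ 2 := by
        linear_combination (L * ‖v‖ ^ 2 + 2 * ⟪v, y - g⟫) * hRL + ‖v‖ ^ 2 * hLb
      rw [e1] at hmul
      nlinarith [hmul]
    -- bound on the correction term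
    have hgs2 : ‖g - s‖ ^ 2 ≤ (1 + σ) ^ 2 * ‖y - g‖ ^ 2 := by
      nlinarith [hgs, norm_nonneg (g - s), norm_nonneg (y - g)]
    have step4 : ((1 - σ) / (1 + σ)) * (R * ‖g - s‖ ^ 2)
        ≤ (1 - σ ^ 2) * (R * ‖y - g‖ ^ 2) := by
      have h41 : ((1 - σ) / (1 + σ)) * (R * ‖g - s‖ ^ 2)
          ≤ ((1 - σ) / (1 + σ)) * (R * ((1 + σ) ^ 2 * ‖y - g‖ ^ 2)) := by
        apply mul_le_mul_of_nonneg_left _ (div_nonneg (by linarith) (by linarith))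
        exact mul_le_mul_of_nonneg_left hgs2 hRnn
      have h42 : ((1 - σ) / (1 + σ)) * (R * ((1 + σ) ^ 2 * ‖y - g‖ ^ 2))
          = (1 - σ ^ 2) * (R * ‖y - g‖ ^ 2) := by
        field_simp
        ring
      linarith [h41, h42.le, h42.ge]
    -- convexity inequalities
    have hc1 : f y + ⟪v, xf k - y⟫ ≤ f (xf k) := by
      rw [hv]; exact ahpe_subgrad f hconv hdiff y (xf k)
    have hc2 : f y + ⟪v, xstar - y⟫ ≤ f xstar := by
      rw [hv]; exact ahpe_subgrad f hconv hdiff y xstar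
    -- vector identity
    have hsmul : β k • g = η k • x k + B k • xf k := by
      rw [hg, hxg k hk, hα, smul_add, smul_smul, smul_smul]
      have e1 : β k * (η k / β k) = η k := by field_simp
      have e2 : β k * (1 - η k / β k) = B k := by
        have h : B k = β k - η k := by rw [hβB, hBsucc]; ring
        rw [h]; field_simp
      rw [e1, e2]
    have hbk : β k = B k + η k := by rw [hβB, hBsucc]
    have hvec : B k • (y - xf k) + η k • (y - xstar) - η k • (x k - xstar)
        = β k • (y - g) := by
      have h1 : β k • (y - g) = β k • y - β k • g := smul_sub _ _ _
      rw [h1, hsmul, hbk]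
      module
    have hscal : B k * (⟪v, y⟫ - ⟪v, xf k⟫) + η k * (⟪v, y⟫ - ⟪v, xstar⟫)
        - η k * (⟪v, x k⟫ - ⟪v, xstar⟫) = β k * (⟪v, y⟫ - ⟪v, g⟫) := by
      have h := congrArg (fun w => (⟪v, w⟫ : ℝ)) hvec
      simp only [inner_add_right, inner_sub_right, real_inner_smul_right] at h
      exact h
    -- step expansion
    have hvec6 : x (k + 1) - xstar = (x k - xstar) - η k • v := by
      rw [hstep k hk, hv, hy]; module
    have hns : ‖x (k + 1) - xstar‖ ^ 2
        = ‖x k - xstar‖ ^ 2 - 2 * η k * ⟪v, x k - xstar⟫ + (η k) ^ 2 * ‖v‖ ^ 2 := by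
      rw [hvec6, norm_sub_sq_real, real_inner_smul_right, norm_smul, mul_pow,
        Real.norm_eq_abs, sq_abs, real_inner_comm (x k - xstar) v]
      ring
    -- scale convexity inequalities
    have hinner1 : ⟪v, xf k - y⟫ = - ⟪v, y - xf k⟫ := by
      rw [← inner_neg_right]; congr 1; module
    have hinner2 : ⟪v, xstar - y⟫ = - ⟪v, y - xstar⟫ := by
      rw [← inner_neg_right]; congr 1; module
    have m1 : 2 * B k * (f y - f (xf k)) ≤ 2 * B k * ⟪v, y - xf k⟫ := by
      have h1 : f y - f (xf k) ≤ ⟪v, y - xf k⟫ := by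
        rw [hinner1] at hc1; linarith
      nlinarith [hBnn k, h1]
    have m2 : 2 * η k * (f y - f xstar) ≤ 2 * η k * ⟪v, y - xstar⟫ := by
      have h1 : f y - f xstar ≤ ⟪v, y - xstar⟫ := by
        rw [hinner2] at hc2; linarith
      nlinarith [(hηpos k).le, h1]
    -- assemble
    simp only [inner_sub_right] at hstar hns m1 m2
    rw [hBsucc k, hns]
    set a1 : ℝ := ⟪v, y⟫ with ha1
    set a2 : ℝ := ⟪v, xf k⟫ with ha2
    set a3 : ℝ := ⟪v, xstar⟫ with ha3
    set a4 : ℝ := ⟪v, x k⟫ with ha4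
    set a5 : ℝ := ⟪v, g⟫ with ha5
    set n1 : ℝ := ‖v‖ ^ 2 with hn1
    set n2 : ℝ := ‖x k - xstar‖ ^ 2 with hn2
    set n3 : ℝ := ‖g - s‖ ^ 2 with hn3
    set n4 : ℝ := ‖y - g‖ ^ 2 with hn4
    clear_value a1 a2 a3 a4 a5 n1 n2 n3 n4
    linarith only [m1, m2, hscal, hstar, step4]
  -- telescoping
  have tele : ∀ n, n ≤ K →
      2 * B n * (f (xf n) - f xstar) +
        ((1 - σ) / (1 + σ)) *
          ∑ k ∈ Finset.range n, ((α k)⁻¹) ^ 2 * ‖xg k - xs k‖ ^ 2 +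
        ‖x n - xstar‖ ^ 2 ≤ ‖x 0 - xstar‖ ^ 2 := by
    intro n
    induction n with
    | zero => intro _; simp [hB]
    | succ n ih =>
      intro hn
      have hnK : n < K := hn
      have h1 := ih (le_of_lt hnK)
      have h2 := perstep n hnK
      rw [Finset.sum_range_succ, mul_add]
      linarith
  have hfin := tele K (le_refl K)
  have hβK : β (K - 1) = B K := by
    rw [hβ (K-1), show K - 1 + 1 = K from by omega, hB]
  have hnn : 0 ≤ ‖x K - xstar‖ ^ 2 := sq_nonneg _
  rw [hβK]
  linarith
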